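/- arXiv:2101.09386 — 3 statements merged into one kernel-verified Lean document; each statement's English description precedes it below -/
import Mathlib

section
/- Let A = ℤ[x, x⁻¹] be the ring of Laurent polynomials over ℤ, and let Γ be the set of all 2×2 matrices of the form [[x^i, a], [0, x^{−i}]] with i ∈ ℤ and a ∈ A. Then Γ is a subgroup of GL₂(A); it is solvable; and it is generated as a group by the three matrices t = [[x, 0], [0, x⁻¹]], u = [[1, 1], [0, 1]], and v = [[1, x], [0, 1]]; in particular Γ is finitely generated. -/
open Matrix LaurentPolynomial

noncomputable section Aux17

abbrev A17 := LaurentPolynomial ℤ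
abbrev G17 := GL (Fin 2) A17

lemma T_inj17 {m n : ℤ} (h : (T m : A17) = T n) : m = n :=
  AddMonoidAlgebra.single_left_injective (one_ne_zero) h

/-- unit matrix !![p, a; 0, q] with p*q = 1 -/
def mk17 (p q a : A17) (h : p * q = 1) : G17 :=
  ⟨!![p, a; 0, q], !![q, -a; 0, p],
    by rw [Matrix.mul_fin_two, Matrix.one_fin_two]; congr 1 <;> ring_nf <;>
       simp [h, mul_comm p q ▸ h],
    by rw [Matrix.mul_fin_two, Matrix.one_fin_two]; congr 1 <;> ring_nf <;>
       simp [h, mul_comm p q ▸ h]⟩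

@[simp] lemma mk17_val (p q a : A17) (h : p * q = 1) :
    (mk17 p q a h : Matrix (Fin 2) (Fin 2) A17) = !![p, a; 0, q] := rfl

def tU (k : ℤ) : G17 := mk17 (T k) (T (-k)) 0 (by rw [← T_add, add_neg_cancel, T_zero])

def uU (b : A17) : G17 := mk17 1 1 b (one_mul 1)

@[simp] lemma tU_val (k : ℤ) : ((tU k : G17) : Matrix (Fin 2) (Fin 2) A17)
    = !![T k, 0; 0, T (-k)] := rfl
@[simp] lemma uU_val (b : A17) : ((uU b : G17) : Matrix (Fin 2) (Fin 2) A17)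
    = !![1, b; 0, 1] := rfl

lemma tU_mul (j k : ℤ) : tU j * tU k = tU (j + k) := by
  ext : 1
  rw [Units.val_mul]
  show (!![T j, 0; 0, T (-j)] * !![T k, 0; 0, T (-k)] : Matrix (Fin 2) (Fin 2) A17)
      = !![T (j+k), 0; 0, T (-(j+k))]
  rw [Matrix.mul_fin_two]
  simp only [mul_zero, zero_mul, add_zero, zero_add, ← T_add, neg_add]

lemma tU_zero : tU 0 = 1 := by
  ext : 1
  show (!![T 0, 0; 0, T (-0)] : Matrix (Fin 2) (Fin 2) A17) = _
  rw [Units.val_one, Matrix.one_fin_two, neg_zero, T_zero]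

lemma uU_mul (b c : A17) : uU b * uU c = uU (b + c) := by
  ext : 1
  rw [Units.val_mul]
  show (!![1, b; 0, 1] * !![1, c; 0, 1] : Matrix (Fin 2) (Fin 2) A17) = !![1, b + c; 0, 1]
  rw [Matrix.mul_fin_two]
  simp only [mul_zero, zero_mul, add_zero, zero_add, mul_one, one_mul]
  rw [add_comm c b]

lemma uU_zero : uU 0 = 1 := by
  ext : 1
  show (!![1, 0; 0, 1] : Matrix (Fin 2) (Fin 2) A17) = _
  rw [Units.val_one, Matrix.one_fin_two]

lemma uU_neg (b : A17) : uU (-b) = (uU b)⁻¹ := by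
  rw [eq_inv_iff_mul_eq_one, uU_mul, neg_add_cancel, uU_zero]

lemma tU_neg (k : ℤ) : tU (-k) = (tU k)⁻¹ := by
  rw [eq_inv_iff_mul_eq_one, tU_mul, neg_add_cancel, tU_zero]

lemma tU_zpow (k : ℤ) : tU 1 ^ k = tU k := by
  have hn : ∀ n : ℕ, tU 1 ^ n = tU n := by
    intro n
    induction n with
    | zero => simpa using tU_zero.symm
    | succ n ih =>
        rw [pow_succ, ih, tU_mul]
        exact congrArg tU (by push_cast; ring)
  obtain ⟨n, rfl | rfl⟩ := Int.eq_nat_or_neg k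
  · rw [zpow_natCast, hn]
  · rw [_root_.zpow_neg, zpow_natCast, hn, tU_neg]

lemma tU_conj (k : ℤ) (b : A17) : tU k * uU b * tU (-k) = uU (T k * b * T k) := by
  ext : 1
  rw [Units.val_mul, Units.val_mul, tU_val, tU_val, uU_val, uU_val,
    Matrix.mul_fin_two, Matrix.mul_fin_two]
  simp only [mul_zero, zero_mul, add_zero, zero_add, mul_one, one_mul, neg_neg]
  rw [show (T k : A17) * T (-k) = 1 by rw [← T_add, add_neg_cancel, T_zero],
    show (T (-k) : A17) * T k = 1 by rw [← T_add, neg_add_cancel, T_zero]]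

def Γ17 : Subgroup G17 where
  carrier := {g | ∃ (i : ℤ) (a : A17),
    (g : Matrix (Fin 2) (Fin 2) A17) = !![T i, a; 0, T (-i)]}
  one_mem' := ⟨0, 0, by simp [Units.val_one, Matrix.one_fin_two, T_zero]⟩
  mul_mem' := by
    rintro g h ⟨i, a, hg⟩ ⟨j, b, hh⟩
    refine ⟨i + j, T i * b + a * T (-j), ?_⟩
    rw [Units.val_mul, hg, hh, Matrix.mul_fin_two]
    simp only [mul_zero, zero_mul, add_zero, zero_add, ← T_add, neg_add]
  inv_mem' := by
    rintro g ⟨i, a, hg⟩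
    have : g = mk17 (T i) (T (-i)) a (by rw [← T_add, add_neg_cancel, T_zero]) :=
      Units.ext hg
    refine ⟨-i, -a, ?_⟩
    rw [this]
    simp only [neg_neg]
    rfl

lemma tU_mem (k : ℤ) : tU k ∈ Γ17 := ⟨k, 0, rfl⟩

lemma uU_mem (b : A17) : uU b ∈ Γ17 := ⟨0, b, by simp [uU, T_zero]⟩

def idx17 (g : ↥Γ17) : ℤ := Classical.choose g.2

lemma idx17_spec (g : ↥Γ17) :
    ∃ a, ((g : G17) : Matrix (Fin 2) (Fin 2) A17) = !![T (idx17 g), a; 0, T (-(idx17 g))] :=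
  Classical.choose_spec g.2

def φ17 : ↥Γ17 →* Multiplicative ℤ where
  toFun g := Multiplicative.ofAdd (idx17 g)
  map_one' := by
    obtain ⟨a, ha⟩ := idx17_spec 1
    have h0 : ((1 : ↥Γ17) : G17).val = (1 : Matrix (Fin 2) (Fin 2) A17) := rfl
    rw [h0, Matrix.one_fin_two] at ha
    have := congrFun (congrFun ha 0) 0
    simp at this
    have : (T 0 : A17) = T (idx17 1) := by rw [T_zero]; exact this
    simp [← T_inj17 this]
  map_mul' := by
    intro g h
    obtain ⟨a, ha⟩ := idx17_spec g
    obtain ⟨b, hb⟩ := idx17_spec h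
    obtain ⟨c, hc⟩ := idx17_spec (g * h)
    have hval : ((g * h : ↥Γ17) : G17).val = (g : G17).val * (h : G17).val := rfl
    rw [hval, ha, hb, Matrix.mul_fin_two] at hc
    simp only [mul_zero, zero_mul, add_zero, zero_add, ← T_add] at hc
    have h00 := congrFun (congrFun hc 0) 0
    simp only [Matrix.cons_val', Matrix.cons_val_zero, Matrix.empty_val',
      Matrix.cons_val_fin_one, Matrix.of_apply] at h00
    have key : idx17 (g * h) = idx17 g + idx17 h := (T_inj17 h00).symm
    show Multiplicative.ofAdd (idx17 (g*h)) = _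
    rw [key]
    rfl

lemma ker_unip {g : ↥Γ17} (hg : g ∈ φ17.ker) :
    ∃ a, (g : G17) = uU a := by
  have h0 : idx17 g = 0 := by
    have := hg
    simp only [MonoidHom.mem_ker, φ17] at this
    simpa using this
  obtain ⟨a, ha⟩ := idx17_spec g
  rw [h0] at ha
  exact ⟨a, Units.ext (by rw [ha]; simp [uU, T_zero])⟩

lemma ker_comm (x y : ↥φ17.ker) : x * y = y * x := by
  obtain ⟨a, ha⟩ := ker_unip x.2
  obtain ⟨b, hb⟩ := ker_unip y.2
  have : ((x : ↥Γ17) : G17) * ((y : ↥Γ17) : G17) = ((y : ↥Γ17) : G17) * ((x : ↥Γ17) : G17) := by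
    rw [ha, hb, uU_mul, uU_mul, add_comm]
  exact Subtype.ext (Subtype.ext this)

lemma solvable17 : IsSolvable ↥Γ17 := by
  letI : CommGroup ↥φ17.ker :=
    { (inferInstance : Group ↥φ17.ker) with mul_comm := ker_comm }
  haveI : IsSolvable ↥φ17.ker := Group.isSolvable_of_comm ker_comm
  exact solvable_of_ker_le_range φ17.ker.subtype φ17
    (by rw [Subgroup.range_subtype])

def tG : G17 := tU 1
def uG : G17 := uU 1
def vG : G17 := uU (T 1)

lemma uU_closure (b : A17) : uU b ∈ Subgroup.closure {tG, uG, vG} := by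
  set Cl := Subgroup.closure {tG, uG, vG} with hCl
  have ht : tG ∈ Cl := Subgroup.subset_closure (Set.mem_insert _ _)
  have hu : uG ∈ Cl :=
    Subgroup.subset_closure (Set.mem_insert_of_mem _ (Set.mem_insert _ _))
  have hv : vG ∈ Cl :=
    Subgroup.subset_closure (Set.mem_insert_of_mem _ (Set.mem_insert_of_mem _ rfl))
  have htk : ∀ k : ℤ, tU k ∈ Cl := fun k => tU_zpow k ▸ Cl.zpow_mem ht k
  let S : AddSubgroup A17 :=
    { carrier := {b | uU b ∈ Cl}
      zero_mem' := by simpa [uU_zero] using Cl.one_mem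
      add_mem' := fun {p q} hp hq => by
        have := Cl.mul_mem hp hq
        rwa [uU_mul] at this
      neg_mem' := fun {p} hp => by
        have := Cl.inv_mem hp
        rwa [← uU_neg] at this }
  have hTn : ∀ n : ℤ, (T n : A17) ∈ S := by
    intro n
    obtain ⟨k, hk | hk⟩ := Int.even_or_odd' n
    · have : tU k * uG * tU (-k) ∈ Cl := Cl.mul_mem (Cl.mul_mem (htk k) hu) (htk (-k))
      rw [show uG = uU 1 from rfl, tU_conj] at this
      show uU (T n) ∈ Cl
      rwa [show (T n : A17) = T k * 1 * T k by
        rw [mul_one, ← T_add, hk, two_mul]]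
    · have : tU k * vG * tU (-k) ∈ Cl := Cl.mul_mem (Cl.mul_mem (htk k) hv) (htk (-k))
      rw [show vG = uU (T 1) from rfl, tU_conj] at this
      show uU (T n) ∈ Cl
      rwa [show (T n : A17) = T k * T 1 * T k by
        rw [← T_add, ← T_add, hk]; ring_nf]
  have : b ∈ S := by
    refine b.induction_on' (fun p q hp hq => S.add_mem hp hq) (fun n a => ?_)
    have : (LaurentPolynomial.C a * T n : A17) = a • T n := by
      rw [zsmul_eq_mul, C_eq_algebraMap, eq_intCast]
    rw [this]
    exact S.zsmul_mem (hTn n) a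
  exact this

lemma Γ_eq_closure : Γ17 = Subgroup.closure {tG, uG, vG} := by
  apply le_antisymm
  · intro g hg
    obtain ⟨i, a, hga⟩ := hg
    have hdecomp : g = tU i * uU (T (-i) * a) := by
      ext : 1
      rw [Units.val_mul, tU_val, uU_val, hga, Matrix.mul_fin_two]
      simp only [mul_zero, zero_mul, add_zero, zero_add, mul_one, one_mul]
      rw [← mul_assoc, ← T_add, add_neg_cancel, T_zero, one_mul]
    rw [hdecomp]
    exact Subgroup.mul_mem _ (tU_zpow i ▸ Subgroup.zpow_mem _
      (Subgroup.subset_closure (Set.mem_insert _ _)) i) (uU_closure _)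
  · rw [Subgroup.closure_le]
    rintro g (rfl | rfl | rfl)
    · exact tU_mem 1
    · exact uU_mem 1
    · exact uU_mem (T 1)

/-- The set of matrices `[[x^i, a], [0, x^{-i}]]` over the Laurent polynomial ring
`A = ℤ[x, x⁻¹]` is a subgroup `Γ` of `GL₂(A)`; it is solvable and is generated by the three
matrices `t = [[x,0],[0,x⁻¹]]`, `u = [[1,1],[0,1]]`, `v = [[1,x],[0,1]]`; in particular it is
finitely generated. -/
theorem stmt_17 :
    ∃ Γ : Subgroup (GL (Fin 2) (LaurentPolynomial ℤ)),
      (∀ g : GL (Fin 2) (LaurentPolynomial ℤ), g ∈ Γ ↔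
        ∃ (i : ℤ) (a : LaurentPolynomial ℤ),
          (g : Matrix (Fin 2) (Fin 2) (LaurentPolynomial ℤ)) = !![T i, a; 0, T (-i)]) ∧
      IsSolvable ↥Γ ∧
      (∃ t u v : GL (Fin 2) (LaurentPolynomial ℤ),
        (t : Matrix (Fin 2) (Fin 2) (LaurentPolynomial ℤ)) = !![T 1, 0; 0, T (-1)] ∧
        (u : Matrix (Fin 2) (Fin 2) (LaurentPolynomial ℤ)) = !![1, 1; 0, 1] ∧
        (v : Matrix (Fin 2) (Fin 2) (LaurentPolynomial ℤ)) = !![1, T 1; 0, 1] ∧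
        Γ = Subgroup.closure {t, u, v}) ∧
      Group.FG ↥Γ := by
  refine ⟨Γ17, fun g => Iff.rfl, solvable17, ⟨tG, uG, vG, rfl, rfl, rfl, Γ_eq_closure⟩, ?_⟩
  rw [Group.fg_iff_subgroup_fg, Subgroup.fg_iff]
  exact ⟨{tG, uG, vG}, Γ_eq_closure.symm, Set.toFinite _⟩

end Aux17
end

section
/- Let A = ℤ[x, x⁻¹] be the ring of Laurent polynomials over ℤ, and let Γ be the subgroup of GL₂(A) consisting of all matrices of the form [[x^i, a], [0, x^{−i}]] with i ∈ ℤ and a ∈ A. Then Γ is not boundedly generated: there do not exist elements γ₁, …, γ_r ∈ Γ such that every element of Γ can be written as γ₁^{k₁}⋯γ_r^{k_r} with k₁, …, k_r ∈ ℤ. -/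
open Matrix LaurentPolynomial

namespace Stmt18Aux

abbrev R (n : ℕ) := AddMonoidAlgebra (ZMod 2) (ZMod n)

/-- the unit `x^t` in `R n`. -/
noncomputable def vu (n : ℕ) (t : ZMod n) : (R n)ˣ where
  val := AddMonoidAlgebra.single t 1
  inv := AddMonoidAlgebra.single (-t) 1
  val_inv := by
    rw [AddMonoidAlgebra.single_mul_single, add_neg_cancel, mul_one, AddMonoidAlgebra.one_def]
  inv_val := by
    rw [AddMonoidAlgebra.single_mul_single, neg_add_cancel, mul_one, AddMonoidAlgebra.one_def]

lemma vu_add (n : ℕ) (s t : ZMod n) : vu n (s + t) = vu n s * vu n t := by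
  ext
  simp [vu, AddMonoidAlgebra.single_mul_single]

noncomputable def ρ (n : ℕ) : LaurentPolynomial ℤ →+* R n :=
  ((AddMonoidAlgebra.lift ℤ (R n) ℤ)
    ((Units.coeHom (R n)).comp (zpowersHom (R n)ˣ (vu n 1)))).toRingHom

lemma vu_pow (n : ℕ) (s : ℤ) : (vu n 1) ^ s = vu n (s : ZMod n) := by
  have h : zpowersHom (R n)ˣ (vu n 1) =
      MonoidHom.comp
        { toFun := fun t : Multiplicative (ZMod n) => vu n t.toAdd
          map_one' := by ext; simp [vu, AddMonoidAlgebra.one_def]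
          map_mul' := fun a b => by
            rw [← vu_add]; rfl }
        (AddMonoidHom.toMultiplicative (Int.castAddHom (ZMod n))) := by
    apply MonoidHom.ext_mint
    simp [zpowersHom_apply]
  have := DFunLike.congr_fun h (Multiplicative.ofAdd s)
  simpa [zpowersHom_apply] using this

lemma ρ_T (n : ℕ) (s : ℤ) : ρ n (T s) = AddMonoidAlgebra.single (s : ZMod n) (1 : ZMod 2) := by
  have : (T s : LaurentPolynomial ℤ) = AddMonoidAlgebra.single s (1 : ℤ) := rfl
  rw [ρ, this]
  rw [AlgHom.toRingHom_eq_coe, RingHom.coe_coe]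
  rw [show (AddMonoidAlgebra.single s (1:ℤ) : LaurentPolynomial ℤ)
      = AddMonoidAlgebra.single s (1:ℤ) from rfl]
  rw [AddMonoidAlgebra.lift_single]
  rw [one_smul]
  show ((vu n 1 ^ s : (R n)ˣ) : R n) = _
  rw [vu_pow]; rfl

/-- shift element `x^{2i}`. -/
noncomputable def wc (n : ℕ) (t : ZMod n) : R n := AddMonoidAlgebra.single (t + t) 1

lemma wc_add (n : ℕ) (s t : ZMod n) : wc n (s + t) = wc n s * wc n t := by
  rw [wc, wc, wc, AddMonoidAlgebra.single_mul_single, mul_one]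
  ring_nf

lemma wc_zero (n : ℕ) : wc n 0 = 1 := by
  rw [wc, add_zero, AddMonoidAlgebra.one_def]

lemma R_add_self (n : ℕ) (c : R n) : c + c = 0 := by
  ext t
  simp only [AddMonoidAlgebra.coeff_add, AddMonoidAlgebra.coeff_zero, Finsupp.add_apply, Finsupp.coe_zero, Pi.zero_apply]
  exact CharTwo.add_self_eq_zero _

/-- The finite quotient group: semidirect product `(ZMod n) ⋉ R n`. -/
structure Qc (n : ℕ) where
  e : ZMod n
  c : R n

namespace Qc

variable {n : ℕ}

@[ext] lemma ext' {q q' : Qc n} (h1 : q.e = q'.e) (h2 : q.c = q'.c) : q = q' := by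
  cases q; cases q'; cases h1; cases h2; rfl

noncomputable instance : Mul (Qc n) := ⟨fun q q' => ⟨q.e + q'.e, q.c + wc n q.e * q'.c⟩⟩
noncomputable instance : One (Qc n) := ⟨⟨0, 0⟩⟩
noncomputable instance : Inv (Qc n) := ⟨fun q => ⟨-q.e, -(wc n (-q.e) * q.c)⟩⟩

lemma mul_def (q q' : Qc n) : q * q' = ⟨q.e + q'.e, q.c + wc n q.e * q'.c⟩ := rfl
lemma one_def : (1 : Qc n) = ⟨0, 0⟩ := rfl

noncomputable instance : Group (Qc n) :=
  Group.ofLeftAxioms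
    (fun a b c => by
      simp only [mul_def, wc_add, add_assoc, mul_add, mul_assoc])
    (fun a => by simp [mul_def, one_def, wc_zero])
    (fun a => by
      show Qc.mk _ _ * Qc.mk _ _ = Qc.mk _ _
      rw [mul_def]
      refine ext' ?_ ?_
      · exact neg_add_cancel _
      · show -(wc n (-a.e) * a.c) + wc n (-a.e) * a.c = 0
        exact neg_add_cancel _)

lemma pow_e (q : Qc n) (m : ℕ) : (q ^ m).e = m • q.e := by
  induction m with
  | zero => simp [one_def]
  | succ m ih => rw [pow_succ, mul_def]; simp only [ih, succ_nsmul]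

lemma pow_exponent (q : Qc n) : q ^ (2 * n) = 1 := by
  rw [mul_comm, pow_mul]
  have he : (q ^ n).e = 0 := by
    rw [pow_e, nsmul_eq_mul, ZMod.natCast_self, zero_mul]
  rw [pow_two, mul_def, he, wc_zero, one_mul, R_add_self, one_def, add_zero]

lemma zpow_congr (q : Qc n) {k k' : ℤ} (h : ((k : ℤ) : ZMod (2 * n)) = (k' : ZMod (2 * n))) :
    q ^ k = q ^ k' := by
  have hd : ((2 * n : ℕ) : ℤ) ∣ k - k' := by
    rw [← ZMod.intCast_zmod_eq_zero_iff_dvd]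
    push_cast
    rw [sub_eq_zero]
    exact_mod_cast h
  obtain ⟨t, ht⟩ := hd
  have : k = k' + (2 * n : ℕ) * t := by omega
  rw [this, _root_.zpow_add, _root_.zpow_mul, zpow_natCast, pow_exponent, _root_.one_zpow,
    mul_one]

end Qc

lemma T_inj {i j : ℤ} (h : (T i : LaurentPolynomial ℤ) = T j) : i = j := by
  have h' : (AddMonoidAlgebra.single i (1:ℤ) : LaurentPolynomial ℤ) = AddMonoidAlgebra.single j 1 := h
  exact (AddMonoidAlgebra.single_left_injective one_ne_zero) h'

/-- the upper triangular element as a unit. -/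
noncomputable def gU (i : ℤ) (a : LaurentPolynomial ℤ) : GL (Fin 2) (LaurentPolynomial ℤ) where
  val := !![T i, a; 0, T (-i)]
  inv := !![T (-i), -a; 0, T i]
  val_inv := by
    rw [Matrix.mul_fin_two, Matrix.one_fin_two]
    rw [show T i * T (-i) + a * 0 = 1 by
      rw [mul_zero, add_zero, ← T_add, add_neg_cancel, T_zero]]
    rw [show T i * -a + a * T i = 0 by ring]
    rw [show (0:LaurentPolynomial ℤ) * T (-i) + T (-i) * 0 = 0 by ring]
    rw [show (0:LaurentPolynomial ℤ) * -a + T (-i) * T i = 1 by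
      rw [zero_mul, zero_add, ← T_add, neg_add_cancel, T_zero]]
  inv_val := by
    rw [Matrix.mul_fin_two, Matrix.one_fin_two]
    rw [show T (-i) * T i + -a * 0 = 1 by
      rw [mul_zero, add_zero, ← T_add, neg_add_cancel, T_zero]]
    rw [show T (-i) * a + -a * T (-i) = 0 by ring]
    rw [show (0:LaurentPolynomial ℤ) * T i + T i * 0 = 0 by ring]
    rw [show (0:LaurentPolynomial ℤ) * a + T i * T (-i) = 1 by
      rw [zero_mul, zero_add, ← T_add, add_neg_cancel, T_zero]]

section

variable (Γ : Subgroup (GL (Fin 2) (LaurentPolynomial ℤ)))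
  (hΓ : ∀ g : GL (Fin 2) (LaurentPolynomial ℤ), g ∈ Γ ↔
      ∃ (i : ℤ) (a : LaurentPolynomial ℤ),
        (g : Matrix (Fin 2) (Fin 2) (LaurentPolynomial ℤ)) = !![T i, a; 0, T (-i)])

noncomputable def iOf (g : Γ) : ℤ := Classical.choose ((hΓ g.1).mp g.2)

noncomputable def aOf (g : Γ) : LaurentPolynomial ℤ :=
  Classical.choose (Classical.choose_spec ((hΓ g.1).mp g.2))

lemma of_spec (g : Γ) :
    ((g : GL (Fin 2) (LaurentPolynomial ℤ)) : Matrix (Fin 2) (Fin 2) (LaurentPolynomial ℤ))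
      = !![T (iOf Γ hΓ g), aOf Γ hΓ g; 0, T (-(iOf Γ hΓ g))] :=
  Classical.choose_spec (Classical.choose_spec ((hΓ g.1).mp g.2))

lemma of_unique (g : Γ) {i : ℤ} {a : LaurentPolynomial ℤ}
    (h : ((g : GL (Fin 2) (LaurentPolynomial ℤ)) : Matrix (Fin 2) (Fin 2) (LaurentPolynomial ℤ))
      = !![T i, a; 0, T (-i)]) : iOf Γ hΓ g = i ∧ aOf Γ hΓ g = a := by
  have h2 := (of_spec Γ hΓ g).symm.trans h
  constructor
  · exact T_inj (by simpa using congrFun (congrFun h2 0) 0)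
  · simpa using congrFun (congrFun h2 0) 1

variable (n : ℕ)

noncomputable def Fc (g : Γ) : Qc n :=
  ⟨((iOf Γ hΓ g : ℤ) : ZMod n), ρ n (aOf Γ hΓ g * T (iOf Γ hΓ g))⟩

lemma Fc_mul (g h : Γ) : Fc Γ hΓ n (g * h) = Fc Γ hΓ n g * Fc Γ hΓ n h := by
  set i := iOf Γ hΓ g with hi
  set a := aOf Γ hΓ g with ha
  set j := iOf Γ hΓ h with hj
  set b := aOf Γ hΓ h with hb
  have hm : (((g * h : Γ) : GL (Fin 2) (LaurentPolynomial ℤ)) :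
        Matrix (Fin 2) (Fin 2) (LaurentPolynomial ℤ))
      = !![T (i + j), T i * b + a * T (-j); 0, T (-(i + j))] := by
    have : (((g * h : Γ) : GL (Fin 2) (LaurentPolynomial ℤ)) :
        Matrix (Fin 2) (Fin 2) (LaurentPolynomial ℤ))
        = ((g : GL (Fin 2) (LaurentPolynomial ℤ)) : Matrix (Fin 2) (Fin 2) (LaurentPolynomial ℤ))
          * ((h : GL (Fin 2) (LaurentPolynomial ℤ)) :
              Matrix (Fin 2) (Fin 2) (LaurentPolynomial ℤ)) := rfl
    rw [this, of_spec Γ hΓ g, of_spec Γ hΓ h, Matrix.mul_fin_two, ← hi, ← ha, ← hj, ← hb]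
    rw [show T i * T j + a * 0 = T (i + j) by rw [mul_zero, add_zero, T_add]]
    rw [show (0:LaurentPolynomial ℤ) * T j + T (-i) * 0 = 0 by ring]
    rw [show (0:LaurentPolynomial ℤ) * b + T (-i) * T (-j) = T (-(i+j)) by
      rw [zero_mul, zero_add, ← T_add, neg_add]]
  obtain ⟨hie, hae⟩ := of_unique Γ hΓ (g * h) hm
  rw [Fc, Fc, Fc, hie, hae, ← hi, ← ha, ← hj, ← hb, Qc.mul_def]
  refine Qc.ext' ?_ ?_
  · push_cast; ring
  · show ρ n ((T i * b + a * T (-j)) * T (i + j))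
      = ρ n (a * T i) + wc n ((i : ℤ) : ZMod n) * ρ n (b * T j)
    have hwc : wc n ((i : ℤ) : ZMod n) = ρ n (T (2 * i)) := by
      rw [ρ_T, wc]
      congr 1
      push_cast
      ring
    have hTT : (T (-j) : LaurentPolynomial ℤ) * T j = 1 := by
      rw [← T_add, neg_add_cancel, T_zero]
    have key : (T i * b + a * T (-j)) * T (i + j) = a * T i + T (2 * i) * (b * T j) := by
      rw [show (2 * i) = i + i from two_mul i, T_add i j, T_add i i]
      calc (T i * b + a * T (-j)) * (T i * T j)
          = a * T i * (T (-j) * T j) + T i * T i * (b * T j) := by ring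
        _ = a * T i + T i * T i * (b * T j) := by rw [hTT, mul_one]
    rw [hwc, ← _root_.map_mul, ← map_add]
    exact congrArg (ρ n) key

noncomputable def Fhom : Γ →* Qc n := MonoidHom.mk' (Fc Γ hΓ n) (Fc_mul Γ hΓ n)

lemma Fhom_sample (a : LaurentPolynomial ℤ) (hmem : gU 0 a ∈ Γ) :
    Fhom Γ hΓ n ⟨gU 0 a, hmem⟩ = ⟨0, ρ n a⟩ := by
  have hv : (((⟨gU 0 a, hmem⟩ : Γ) : GL (Fin 2) (LaurentPolynomial ℤ)) :
      Matrix (Fin 2) (Fin 2) (LaurentPolynomial ℤ)) = !![T 0, a; 0, T (-0)] := rfl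
  obtain ⟨hie, hae⟩ := of_unique Γ hΓ _ hv
  show Fc Γ hΓ n _ = _
  rw [Fc, hie, hae, T_zero, mul_one]
  refine Qc.ext' ?_ rfl
  simp

end

lemma rho_sample_eval (n : ℕ) [NeZero n] (ε : Fin n → ZMod 2) (j0 : Fin n) :
    (ρ n (∑ j : Fin n, (ε j).val • T (j : ℤ))).coeff (((j0 : ℤ) : ZMod n)) = ε j0 := by
  rw [map_sum]
  have hterm : ∀ j : Fin n,
      ρ n ((ε j).val • T (j : ℤ)) = AddMonoidAlgebra.single (((j : ℤ) : ZMod n)) (ε j) := by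
    intro j
    rw [map_nsmul, ρ_T, AddMonoidAlgebra.smul_single, nsmul_eq_mul, mul_one]
    congr 1
    exact ZMod.natCast_rightInverse (ε j)
  simp_rw [hterm]
  rw [AddMonoidAlgebra.coeff_sum, Finsupp.finset_sum_apply]
  rw [Finset.sum_eq_single_of_mem j0 (Finset.mem_univ j0)]
  · rw [AddMonoidAlgebra.coeff_single, Finsupp.single_apply, if_pos rfl]
  · intro b _ hb
    rw [AddMonoidAlgebra.coeff_single, Finsupp.single_apply, if_neg]
    intro hc
    apply hb
    have hv := congrArg ZMod.val hc
    rw [show ((b : ℤ) : ZMod n) = ((b : ℕ) : ZMod n) by push_cast; rfl,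
      show ((j0 : ℤ) : ZMod n) = ((j0 : ℕ) : ZMod n) by push_cast; rfl,
      ZMod.val_cast_of_lt b.isLt, ZMod.val_cast_of_lt j0.isLt] at hv
    exact Fin.ext hv

lemma arith (r : ℕ) : (2 * 2 ^ (2 * r + 2)) ^ r < 2 ^ 2 ^ (2 * r + 2) := by
  have h1 : (2 * 2 ^ (2 * r + 2)) ^ r = 2 ^ ((2 * r + 3) * r) := by
    rw [← pow_succ', ← pow_mul]
  rw [h1]
  apply Nat.pow_lt_pow_right one_lt_two
  have h2 : r + 1 ≤ 2 ^ r := Nat.lt_two_pow_self (n := r)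
  have h3 : 2 ^ (2 * r + 2) = 4 * (2 ^ r) * (2 ^ r) := by ring
  nlinarith [h2, h3]

end Stmt18Aux

open Stmt18Aux

/-- The subgroup `Γ` of `GL₂(ℤ[x,x⁻¹])` of matrices `[[x^i, a], [0, x^{-i}]]` is not boundedly
generated: there are no `γ₁, …, γ_r ∈ Γ` such that every element of `Γ` is a product
`γ₁^{k₁} ⋯ γ_r^{k_r}` with integer exponents. -/
theorem stmt_18 (Γ : Subgroup (GL (Fin 2) (LaurentPolynomial ℤ)))
    (hΓ : ∀ g : GL (Fin 2) (LaurentPolynomial ℤ), g ∈ Γ ↔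
      ∃ (i : ℤ) (a : LaurentPolynomial ℤ),
        (g : Matrix (Fin 2) (Fin 2) (LaurentPolynomial ℤ)) = !![T i, a; 0, T (-i)]) :
    ¬ ∃ (r : ℕ) (γ : Fin r → GL (Fin 2) (LaurentPolynomial ℤ)),
        (∀ i, γ i ∈ Γ) ∧
        ∀ x ∈ Γ, ∃ k : Fin r → ℤ, x = (List.ofFn fun i => γ i ^ k i).prod := by
  rintro ⟨r, γ, hmem, hgen⟩
  set n : ℕ := 2 ^ (2 * r + 2) with hn
  have hn0 : 0 < n := Nat.pow_pos (by norm_num)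
  haveI : NeZero n := ⟨hn0.ne'⟩
  haveI : NeZero (2 * n) := ⟨by positivity⟩
  -- the cyclic generators as elements of Γ
  set δ : Fin r → Γ := fun m => ⟨γ m, hmem m⟩ with hδ
  -- sample elements
  set aE : (Fin n → ZMod 2) → LaurentPolynomial ℤ :=
    fun ε => ∑ j : Fin n, (ε j).val • T (j : ℤ) with haE
  have memE : ∀ ε, gU 0 (aE ε) ∈ Γ := fun ε => (hΓ _).mpr ⟨0, aE ε, rfl⟩
  set K : (Fin n → ZMod 2) → Fin r → ℤ :=
    fun ε => Classical.choose (hgen (gU 0 (aE ε)) (memE ε)) with hKdef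
  have hK : ∀ ε, gU 0 (aE ε) = (List.ofFn fun m => γ m ^ K ε m).prod :=
    fun ε => Classical.choose_spec (hgen (gU 0 (aE ε)) (memE ε))
  set Φ : (Fin n → ZMod 2) → Fin r → ZMod (2 * n) :=
    fun ε m => ((K ε m : ℤ) : ZMod (2 * n)) with hΦ
  -- the key: Φ is injective
  have base : ∀ ε, Fhom Γ hΓ n ⟨gU 0 (aE ε), memE ε⟩
      = (List.ofFn fun m => (Fhom Γ hΓ n (δ m)) ^ (K ε m)).prod := by
    intro ε
    have hsub : (⟨gU 0 (aE ε), memE ε⟩ : Γ) = (List.ofFn fun m => δ m ^ K ε m).prod := by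
      apply Subtype.ext
      have h1 : ((((List.ofFn fun m => δ m ^ K ε m).prod : Γ)) :
            GL (Fin 2) (LaurentPolynomial ℤ))
          = (List.ofFn fun m => γ m ^ K ε m).prod := by
        show Γ.subtype _ = _
        rw [map_list_prod, List.map_ofFn]
        exact congrArg List.prod
          (congrArg List.ofFn (funext fun m => map_zpow Γ.subtype (δ m) (K ε m)))
      exact (hK ε).trans h1.symm
    rw [hsub, map_list_prod, List.map_ofFn]
    exact congrArg List.prod
      (congrArg List.ofFn (funext fun m => map_zpow (Fhom Γ hΓ n) (δ m) (K ε m)))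
  have hinj : Function.Injective Φ := by
    intro ε ε' h
    have hF : Fhom Γ hΓ n ⟨gU 0 (aE ε), memE ε⟩ = Fhom Γ hΓ n ⟨gU 0 (aE ε'), memE ε'⟩ := by
      rw [base, base]
      exact congrArg List.prod (congrArg List.ofFn (funext fun m =>
        Qc.zpow_congr ((Fhom Γ hΓ n) (δ m)) (k := K ε m) (k' := K ε' m) (congrFun h m)))
    rw [Fhom_sample, Fhom_sample] at hF
    have hρ : ρ n (aE ε) = ρ n (aE ε') := congrArg Qc.c hF
    funext j0
    have e1 : (ρ n (aE ε)).coeff (((j0 : ℤ) : ZMod n)) = ε j0 := rho_sample_eval n ε j0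
    have e2 : (ρ n (aE ε')).coeff (((j0 : ℤ) : ZMod n)) = ε' j0 := rho_sample_eval n ε' j0
    rw [hρ] at e1
    exact e1.symm.trans e2
  have hcard := Fintype.card_le_of_injective Φ hinj
  rw [Fintype.card_fun, Fintype.card_fun, ZMod.card, ZMod.card, Fintype.card_fin,
    Fintype.card_fin] at hcard
  exact absurd (lt_of_le_of_lt hcard (arith r)) (lt_irrefl _)
end

section
/- Let Γ be a group and let Δ be a subgroup of Γ of finite index. Then Γ is boundedly generated if and only if Δ is boundedly generated. -/
/-- A group `G` is boundedly generated if it is a finite product of cyclic subgroups: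
there are `γ₁, …, γ_r ∈ G` such that every element is `γ₁^{k₁} ⋯ γ_r^{k_r}`. -/
def BoundedGeneration (G : Type*) [Group G] : Prop :=
  ∃ (r : ℕ) (γ : Fin r → G), ∀ x : G, ∃ k : Fin r → ℤ,
    x = (List.ofFn fun i => γ i ^ k i).prod

section BGAux

variable {G : Type*} [Group G]

/-- `x` is a product `γ 0 ^ k 0 * ⋯ * γ (r-1) ^ k (r-1)`. -/
def PC (γ : ℕ → G) (r : ℕ) (x : G) : Prop :=
  ∃ k : ℕ → ℤ, x = ((List.range r).map fun i => γ i ^ k i).prod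

theorem ofFn_eq_range_map {α : Type*} (f : ℕ → α) (n : ℕ) :
    (List.ofFn fun i : Fin n => f i) = (List.range n).map f := by
  induction n with
  | zero => simp
  | succ n ih => rw [List.ofFn_succ', List.range_succ, List.map_append]; simp [ih]

theorem PC.congr {γ δ : ℕ → G} {r : ℕ} {x : G} (h : ∀ i < r, γ i = δ i) (hx : PC γ r x) :
    PC δ r x := by
  obtain ⟨k, hk⟩ := hx
  exact ⟨k, hk.trans (congrArg List.prod (List.map_congr_left fun i hi => by
    rw [h i (List.mem_range.1 hi)]))⟩

theorem PC.mul {γ δ : ℕ → G} {r s : ℕ} {a b : G} (ha : PC γ r a) (hb : PC δ s b) :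
    PC (fun i => if i < r then γ i else δ (i - r)) (r + s) (a * b) := by
  obtain ⟨k, hk⟩ := ha
  obtain ⟨l, hl⟩ := hb
  refine ⟨fun i => if i < r then k i else l (i - r), ?_⟩
  rw [List.range_add, List.map_append, List.prod_append, hk, hl, List.map_map]
  congr 1
  · exact congrArg List.prod (List.map_congr_left fun i hi => by
      simp [List.mem_range.1 hi])
  · exact congrArg List.prod (List.map_congr_left fun i _ => by simp)

theorem PC.single (t : ℕ → G) {r j : ℕ} (hj : j < r) (q : ℤ) : PC t r (t j ^ q) := by
  refine ⟨fun i => if i = j then q else 0, ?_⟩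
  induction r with
  | zero => omega
  | succ r ih =>
    rw [List.range_succ, List.map_append, List.prod_append]
    rcases Nat.lt_or_ge j r with h | h
    · rw [← ih h]
      have : r ≠ j := by omega
      simp [this]
    · have hj' : j = r := by omega
      subst hj'
      have h1 : (((List.range j).map fun i => t i ^ if i = j then q else (0 : ℤ))).prod = 1 := by
        apply List.prod_eq_one
        intro x hx
        simp only [List.mem_map, List.mem_range] at hx
        obtain ⟨i, hi, rfl⟩ := hx
        have : i ≠ j := by omega
        simp [this]
      rw [h1, one_mul]
      simp

theorem PC.chain {m : ℕ} (hm : 0 < m) (F : ℕ → ℕ → G) (x : ℕ → G) :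
    ∀ r, (∀ i < r, PC (F i) m (x i)) →
      PC (fun p => F (p / m) (p % m)) (r * m) (((List.range r).map x).prod) := by
  intro r
  induction r with
  | zero => intro _; exact ⟨fun _ => 0, by simp⟩
  | succ r ih =>
    intro hall
    have h1 := ih fun i hi => hall i (by omega)
    have h2 := hall r (by omega)
    have h3 := h1.mul h2
    rw [List.range_succ, List.map_append, List.prod_append, List.map_singleton,
      List.prod_singleton]
    have hrm : (r + 1) * m = r * m + m := by ring
    rw [hrm]
    refine PC.congr ?_ h3
    intro i hi
    by_cases hlt : i < r * m
    · simp [hlt]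
    · have hd : i / m = r := Nat.div_eq_of_lt_le (by omega) (by omega)
      have hmod : i % m = i - r * m := by
        conv_lhs => rw [Nat.mod_def, hd]
        rw [Nat.mul_comm]
      simp [hlt, hd, hmod]

theorem bg_iff_pc : BoundedGeneration G ↔ ∃ (r : ℕ) (γ : ℕ → G), ∀ x : G, PC γ r x := by
  constructor
  · rintro ⟨r, γ, hγ⟩
    refine ⟨r, fun i => if h : i < r then γ ⟨i, h⟩ else 1, fun x => ?_⟩
    obtain ⟨k, hk⟩ := hγ x
    refine ⟨fun i => if h : i < r then k ⟨i, h⟩ else 0, ?_⟩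
    rw [← ofFn_eq_range_map, hk]
    refine congrArg List.prod (congrArg List.ofFn (funext fun i => ?_))
    simp [i.isLt]
  · rintro ⟨r, γ, hγ⟩
    refine ⟨r, fun i => γ i, fun x => ?_⟩
    obtain ⟨k, hk⟩ := hγ x
    exact ⟨fun i => k i, by rw [ofFn_eq_range_map (fun i => γ i ^ k i) r]; exact hk⟩

/-- prefix products -/
def pref (b : ℕ → G) (i : ℕ) : G := ((List.range i).map b).prod

theorem pref_succ (b : ℕ → G) (i : ℕ) : pref b (i + 1) = pref b i * b i := by
  simp [pref, List.range_succ]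

/-- telescoping: `∏ aᵢbᵢ = (∏ uᵢaᵢuᵢ⁻¹) * u_r` where `uᵢ = b₀⋯b_{i-1}`. -/
theorem tele (a b : ℕ → G) (r : ℕ) :
    ((List.range r).map fun i => a i * b i).prod
      = ((List.range r).map fun i => pref b i * a i * (pref b i)⁻¹).prod * pref b r := by
  induction r with
  | zero => simp [pref]
  | succ r ih =>
    rw [List.range_succ, List.map_append, List.prod_append, ih,
      List.map_append, List.prod_append, pref_succ]
    simp [mul_assoc]

theorem bg_subgroup_of_pc (N : Subgroup G) (R : ℕ) (Γ : ℕ → G) (hmem : ∀ i, Γ i ∈ N)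
    (h : ∀ x : ↥N, PC Γ R (x : G)) : BoundedGeneration ↥N := by
  rw [bg_iff_pc]
  refine ⟨R, fun i => ⟨Γ i, hmem i⟩, fun x => ?_⟩
  obtain ⟨k, hk⟩ := h x
  refine ⟨k, ?_⟩
  rw [Subtype.ext_iff, hk, SubmonoidClass.coe_list_prod, List.map_map]
  exact congrArg List.prod (List.map_congr_left fun i _ => by simp)

theorem bg_of_mulEquiv {H : Type*} [Group H] (e : G ≃* H) (h : BoundedGeneration G) :
    BoundedGeneration H := by
  obtain ⟨r, γ, hγ⟩ := h
  refine ⟨r, fun i => e (γ i), fun x => ?_⟩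
  obtain ⟨k, hk⟩ := hγ (e.symm x)
  refine ⟨k, ?_⟩
  have := congrArg e hk
  rw [e.apply_symm_apply] at this
  rw [this, map_list_prod e, List.map_ofFn]
  exact congrArg List.prod (congrArg List.ofFn (funext fun i => by simp))

/-- easy direction: bounded generation of a finite index subgroup implies that of the group -/
theorem bg_of_subgroup_bg (Δ : Subgroup G) (h : Δ.FiniteIndex) (hΔ : BoundedGeneration ↥Δ) :
    BoundedGeneration G := by
  rw [bg_iff_pc] at hΔ ⊢
  obtain ⟨r, γ, hγ⟩ := hΔ
  have hfin : Finite (G ⧸ Δ) := by haveI := h; exact Subgroup.finite_quotient_of_finiteIndex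
  have : Fintype (G ⧸ Δ) := Fintype.ofFinite _
  set n := Fintype.card (G ⧸ Δ) with hn
  let e : (G ⧸ Δ) ≃ Fin n := Fintype.equivFin (G ⧸ Δ)
  let T : ℕ → G := fun j => if hj : j < n then (e.symm ⟨j, hj⟩).out else 1
  let γG : ℕ → G := fun i => ((γ i : ↥Δ) : G)
  refine ⟨n + r, fun i => if i < n then T i else γG (i - n), fun x => ?_⟩
  set t : G := (QuotientGroup.mk x : G ⧸ Δ).out with ht
  have hd : t⁻¹ * x ∈ Δ := QuotientGroup.eq.mp (QuotientGroup.out_eq' (QuotientGroup.mk x))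
  have hx : x = t * (t⁻¹ * x) := by group
  have h1 : PC T n t := by
    have hTj : T ((e (QuotientGroup.mk x)).val) = t := by
      simp only [T, dif_pos (e (QuotientGroup.mk x)).isLt]
      rw [Fin.eta, Equiv.symm_apply_apply]
    have := PC.single T (r := n) (j := (e (QuotientGroup.mk x)).val)
      (e (QuotientGroup.mk x)).isLt 1
    rwa [hTj, zpow_one] at this
  have h2 : PC γG r (t⁻¹ * x) := by
    obtain ⟨k, hk⟩ := hγ ⟨t⁻¹ * x, hd⟩
    refine ⟨k, ?_⟩
    have := congrArg (Subgroup.subtype Δ) hk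
    rw [map_list_prod, List.map_map] at this
    simpa [Function.comp_def] using this
  rw [hx]
  exact h1.mul h2

/-- hard direction, normal case -/
theorem bg_normal_subgroup (N : Subgroup G) [hNn : N.Normal] (hN : N.FiniteIndex)
    (hG : BoundedGeneration G) : BoundedGeneration ↥N := by
  classical
  rw [bg_iff_pc] at hG
  obtain ⟨r, γ, hγ⟩ := hG
  set n := N.index with hn'
  have hn : 0 < n := Nat.pos_of_ne_zero hN.index_ne_zero
  have : Nonempty (Fin r → Fin n) := ⟨fun _ => ⟨0, hn⟩⟩
  set m := Fintype.card (Fin r → Fin n) with hm'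
  have hm : 0 < m := Fintype.card_pos
  let eV : (Fin r → Fin n) ≃ Fin m := Fintype.equivFin _
  let bv : (Fin r → Fin n) → ℕ → G := fun v i => if h : i < r then γ i ^ ((v ⟨i, h⟩ : ℕ) : ℤ) else 1
  let u : (Fin r → Fin n) → ℕ → G := fun v i => pref (bv v) i
  let cgen : ℕ → (Fin r → Fin n) → G := fun i v => u v i * γ i ^ n * (u v i)⁻¹
  have hcgen : ∀ i v, cgen i v ∈ N := fun i v =>
    hNn.conj_mem _ (Subgroup.pow_index_mem N (γ i)) (u v i)
  let tgen : (Fin r → Fin n) → G := fun v => if u v r ∈ N then u v r else 1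
  have htgen : ∀ v, tgen v ∈ N := fun v => by
    by_cases h : u v r ∈ N <;> simp [tgen, h, one_mem]
  let F : ℕ → ℕ → G := fun i p =>
    if hp : p < m then (if i < r then cgen i (eV.symm ⟨p, hp⟩) else tgen (eV.symm ⟨p, hp⟩)) else 1
  have hmem : ∀ p, (fun p => F (p / m) (p % m)) p ∈ N := by
    intro p
    simp only [F]
    split_ifs with h1 h2
    · exact hcgen _ _
    · exact htgen _
    · exact one_mem N
  apply bg_subgroup_of_pc N ((r + 1) * m) _ hmem
  intro x
  obtain ⟨k, hk⟩ := hγ (x : G)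
  set q : ℕ → ℤ := fun i => k i / (n : ℤ) with hq'
  set s : ℕ → ℤ := fun i => k i % (n : ℤ) with hs'
  have hs0 : ∀ i, 0 ≤ s i := fun i => Int.emod_nonneg _ (by exact_mod_cast hn.ne')
  have hslt : ∀ i, s i < (n : ℤ) := fun i => Int.emod_lt_of_pos _ (by exact_mod_cast hn)
  let v : Fin r → Fin n := fun i => ⟨(s i.val).toNat, by
    have h1 := hs0 i.val; have h2 := hslt i.val; omega⟩
  have hbv : ∀ i < r, bv v i = γ i ^ s i := by
    intro i hi
    simp only [bv, dif_pos hi, v]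
    rw [Int.toNat_of_nonneg (hs0 i)]
  let a : ℕ → G := fun i => (γ i ^ n) ^ q i
  have hab : ∀ i < r, γ i ^ k i = a i * bv v i := by
    intro i hi
    rw [hbv i hi]
    have hkeq : k i = (n : ℤ) * q i + s i := (Int.mul_ediv_add_emod (k i) (n : ℤ)).symm
    rw [hkeq, zpow_add, zpow_mul, zpow_natCast]
  have hk2 : (x : G) = ((List.range r).map fun i => a i * bv v i).prod :=
    hk.trans (congrArg List.prod (List.map_congr_left fun i hi =>
      hab i (List.mem_range.1 hi)))
  have hk3 : (x : G)
      = ((List.range r).map fun i => u v i * a i * (u v i)⁻¹).prod * u v r := by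
    rw [hk2, tele]
  have hterm : ∀ i < r, u v i * a i * (u v i)⁻¹ = cgen i v ^ q i := by
    intro i hi
    simp only [cgen, a]
    rw [conj_zpow]
  have hk4 : (x : G) = ((List.range r).map fun i => cgen i v ^ q i).prod * u v r := by
    rw [hk3]
    congr 1
    exact congrArg List.prod (List.map_congr_left fun i hi => hterm i (List.mem_range.1 hi))
  have hprodN : ((List.range r).map fun i => cgen i v ^ q i).prod ∈ N := by
    apply Subgroup.list_prod_mem
    intro y hy
    simp only [List.mem_map] at hy
    obtain ⟨i, _, rfl⟩ := hy
    exact N.zpow_mem (hcgen i v) _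
  have hur : u v r ∈ N := by
    have heq : u v r = (((List.range r).map fun i => cgen i v ^ q i).prod)⁻¹ * (x : G) := by
      rw [hk4]; group
    rw [heq]
    exact N.mul_mem (N.inv_mem hprodN) x.2
  let xs : ℕ → G := fun i => if i < r then cgen i v ^ q i else u v r
  have hx : (x : G) = ((List.range (r + 1)).map xs).prod := by
    rw [List.range_succ, List.map_append, List.prod_append, List.map_singleton,
      List.prod_singleton, hk4]
    congr 1
    · exact congrArg List.prod (List.map_congr_left fun i hi => by
        simp [xs, List.mem_range.1 hi])
    · simp [xs]
  have hst : ∀ i < r + 1, PC (F i) m (xs i) := by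
    intro i hi
    by_cases hir : i < r
    · have hF : F i ((eV v).val) = cgen i v := by
        simp only [F, dif_pos (eV v).isLt, if_pos hir, Fin.eta, Equiv.symm_apply_apply]
      have h := PC.single (F i) (eV v).isLt (q i)
      rw [hF] at h
      simpa only [xs, if_pos hir] using h
    · have hF : F i ((eV v).val) = u v r := by
        simp only [F, dif_pos (eV v).isLt, if_neg hir, Fin.eta, Equiv.symm_apply_apply,
          tgen, if_pos hur]
      have h := PC.single (F i) (eV v).isLt 1
      rw [hF, zpow_one] at h
      simpa only [xs, if_neg hir] using h
  have h := PC.chain hm F xs (r + 1) hst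
  rw [← hx] at h
  exact h

end BGAux

/-- A group is boundedly generated if and only if any of its finite index subgroups is. -/
theorem stmt_19 {G : Type*} [Group G] (Δ : Subgroup G) (h : Δ.FiniteIndex) :
    BoundedGeneration G ↔ BoundedGeneration ↥Δ := by
  constructor
  · intro hG
    haveI := h
    have hle : Δ.normalCore ≤ Δ := Subgroup.normalCore_le Δ
    have hN : BoundedGeneration ↥Δ.normalCore :=
      bg_normal_subgroup Δ.normalCore inferInstance hG
    have hK : BoundedGeneration ↥(Δ.normalCore.subgroupOf Δ) :=
      bg_of_mulEquiv (Subgroup.subgroupOfEquivOfLe hle).symm hN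
    have hKfi : (Δ.normalCore.subgroupOf Δ).FiniteIndex := by
      constructor
      have hmul := Subgroup.relIndex_mul_index hle
      have hcore : Δ.normalCore.index ≠ 0 :=
        (Subgroup.finiteIndex_normalCore (H := Δ)).index_ne_zero
      intro hzero
      rw [show (Δ.normalCore.subgroupOf Δ).index = Δ.normalCore.relIndex Δ from rfl] at hzero
      rw [hzero, zero_mul] at hmul
      exact hcore hmul.symm
    exact bg_of_subgroup_bg (Δ.normalCore.subgroupOf Δ) hKfi hK
  · exact bg_of_subgroup_bg Δ h
end
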